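/- Let A : X → Y be a bounded linear operator whose kernel is spanned by linearly independent elements φ₁, …, φₙ ∈ X and whose range R(A) is closed, with Y the direct sum of R(A) and the span of z₁, …, zₙ ∈ Y. Let ψ₁, …, ψₙ ∈ Y* vanish on R(A) with ⟨z_i, ψ_k⟩ = 1 if i = k and 0 otherwise, and let γ₁, …, γₙ ∈ X* satisfy det[⟨φ_i, γ_k⟩]_{i,k=1}^{n} ≠ 0. Then: (i) for every f ∈ Y the equation A x + Σ_{i=1}^{n} ⟨x, γ_i⟩ z_i = f − Σ_{i=1}^{n} ⟨f, ψ_i⟩ z_i has a unique solution; (ii) if x* is the unique solution of A x = f − Σ⟨f, ψ_i⟩ z_i satisfying ⟨x*, γ_i⟩ = 0 for i = 1, …, n, and f̃_δ ∈ Y satisfies ‖f̃_δ − f‖ ≤ δ, then the unique solution x̃_δ of A x + Σ⟨x, γ_i⟩ z_i = f̃_δ − Σ⟨f̃_δ, ψ_i⟩ z_i satisfies ‖x̃_δ − x*‖ → 0 as δ → 0⁺. -/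

import Mathlib

open Set Filter Topology

set_option maxHeartbeats 2000000

/-- Finite-rank stabilization for a Fredholm operator: with
`B = Σᵢ ⟨·, γᵢ⟩ zᵢ` and `det[⟨φᵢ, γₖ⟩] ≠ 0`,
(i) for every `f` the perturbed equation
`A x + Σᵢ ⟨x, γᵢ⟩ zᵢ = f − Σᵢ ⟨f, ψᵢ⟩ zᵢ` has a unique solution;
(ii) if `x*` is the unique solution of `A x = f − Σᵢ ⟨f, ψᵢ⟩ zᵢ` with
`⟨x*, γᵢ⟩ = 0`, and `‖f̃_δ − f‖ ≤ δ`, then the unique solution `x̃_δ` of the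
perturbed equation with data `f̃_δ` satisfies `‖x̃_δ − x*‖ → 0` as `δ → 0⁺`. -/
theorem fredholm_finite_rank_stabilizer
    {X Y : Type*} [NormedAddCommGroup X] [NormedSpace ℝ X] [CompleteSpace X]
    [NormedAddCommGroup Y] [NormedSpace ℝ Y] [CompleteSpace Y]
    (A : X →L[ℝ] Y) (n : ℕ)
    (φ : Fin n → X) (hφ : LinearIndependent ℝ φ)
    (hker : LinearMap.ker (A : X →ₗ[ℝ] Y) = Submodule.span ℝ (Set.range φ))
    (hclosed : IsClosed (LinearMap.range (A : X →ₗ[ℝ] Y) : Set Y))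
    (z : Fin n → Y)
    (hcompl : IsCompl (LinearMap.range (A : X →ₗ[ℝ] Y)) (Submodule.span ℝ (Set.range z)))
    (ψ : Fin n → Y →L[ℝ] ℝ)
    (hψA : ∀ (k : Fin n) (x : X), ψ k (A x) = 0)
    (hψz : ∀ i k : Fin n, ψ k (z i) = if i = k then 1 else 0)
    (γ : Fin n → X →L[ℝ] ℝ)
    (hdet : Matrix.det (Matrix.of fun i k => γ k (φ i)) ≠ 0) :
    (∀ f : Y, ∃! x : X,
      A x + ∑ i, (γ i x) • z i = f - ∑ i, (ψ i f) • z i) ∧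
    (∀ (f : Y) (xs : X),
      A xs = f - ∑ i, (ψ i f) • z i → (∀ i, γ i xs = 0) →
      ∀ ftil : ℝ → Y, (∀ δ > 0, ‖ftil δ - f‖ ≤ δ) →
      ∀ xt : ℝ → X,
        (∀ δ > 0, A (xt δ) + ∑ i, (γ i (xt δ)) • z i
            = ftil δ - ∑ i, (ψ i (ftil δ)) • z i) →
        Tendsto (fun δ => ‖xt δ - xs‖) (𝓝[>] (0 : ℝ)) (𝓝 0)) := by
  classical
  set M : Matrix (Fin n) (Fin n) ℝ := Matrix.of fun i k => γ k (φ i) with hM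
  set T : X →L[ℝ] Y := A + ∑ i, (γ i).smulRight (z i) with hT
  have hTapp : ∀ x, T x = A x + ∑ i, (γ i x) • z i := by
    intro x
    simp [hT, ContinuousLinearMap.sum_apply]
  have hMentry : ∀ i k, M i k = γ k (φ i) := fun i k => rfl
  have hdetT : (M.transpose).det ≠ 0 := by rwa [Matrix.det_transpose]
  -- kernel of T is trivial
  have hkerT : LinearMap.ker (T : X →ₗ[ℝ] Y) = ⊥ := by
    rw [LinearMap.ker_eq_bot']
    intro x hx
    have hx' : A x + ∑ i, (γ i x) • z i = 0 := by rw [← hTapp]; exact hx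
    have hAx : A x = -(∑ i, (γ i x) • z i) := by
      rw [eq_neg_iff_add_eq_zero]; exact hx'
    have hmem : A x ∈ Submodule.span ℝ (Set.range z) := by
      rw [hAx]
      exact neg_mem (Submodule.sum_smul_mem _ _ (fun i _ =>
        Submodule.subset_span ⟨i, rfl⟩))
    have hA0 : A x = 0 := by
      have : A x ∈ LinearMap.range (A : X →ₗ[ℝ] Y) ⊓ Submodule.span ℝ (Set.range z) :=
        ⟨⟨x, rfl⟩, hmem⟩
      rw [hcompl.inf_eq_bot] at this
      exact this
    have hsum0 : ∑ i, (γ i x) • z i = (0 : Y) := by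
      rw [hA0, zero_add] at hx'; exact hx'
    have hγ0 : ∀ k, γ k x = 0 := by
      intro k
      have := congrArg (ψ k) hsum0
      simpa [map_sum, hψz, Finset.sum_ite_eq'] using this
    have hxker : x ∈ Submodule.span ℝ (Set.range φ) := by
      rw [← hker]; exact hA0
    obtain ⟨c, hc⟩ := (Submodule.mem_span_range_iff_exists_fun ℝ).mp hxker
    have hcM : Matrix.vecMul c M = 0 := by
      funext k
      have : γ k x = ∑ i, c i * γ k (φ i) := by
        rw [← hc]; simp [map_sum]
      simp only [Matrix.vecMul, dotProduct, hMentry]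
      rw [← this]; exact hγ0 k
    have hc0 : c = 0 := by
      have h1 : M * M⁻¹ = 1 := Matrix.mul_nonsing_inv M (isUnit_iff_ne_zero.mpr hdet)
      calc c = Matrix.vecMul c (M * M⁻¹) := by rw [h1, Matrix.vecMul_one]
        _ = Matrix.vecMul (Matrix.vecMul c M) M⁻¹ := by rw [Matrix.vecMul_vecMul]
        _ = 0 := by rw [hcM]; simp [Matrix.vecMul]
    rw [← hc, hc0]
    simp
  -- T is surjective
  have hrangeT : LinearMap.range (T : X →ₗ[ℝ] Y) = ⊤ := by
    rw [LinearMap.range_eq_top]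
    intro y
    have hy : y ∈ LinearMap.range (A : X →ₗ[ℝ] Y) ⊔ Submodule.span ℝ (Set.range z) := by
      rw [hcompl.sup_eq_top]; trivial
    obtain ⟨a, ⟨u, hu⟩, b, hb, hab⟩ := Submodule.mem_sup.mp hy
    obtain ⟨bc, hbc⟩ := (Submodule.mem_span_range_iff_exists_fun ℝ).mp hb
    -- solve the linear system: Mᵀ *ᵥ c = d where d i = bc i - γ i u
    set d : Fin n → ℝ := fun i => bc i - γ i u with hd
    set c : Fin n → ℝ := Matrix.mulVec (M.transpose)⁻¹ d with hcdef
    have hMc : Matrix.mulVec M.transpose c = d := by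
      rw [hcdef, Matrix.mulVec_mulVec, Matrix.mul_nonsing_inv _ (isUnit_iff_ne_zero.mpr hdetT),
        Matrix.one_mulVec]
    set x : X := u + ∑ j, c j • φ j with hx
    refine ⟨x, ?_⟩
    have hφker : ∀ j, A (φ j) = 0 := by
      intro j
      have : φ j ∈ LinearMap.ker (A : X →ₗ[ℝ] Y) := by
        rw [hker]; exact Submodule.subset_span ⟨j, rfl⟩
      exact this
    have hAx : A x = A u := by
      simp [hx, map_sum, hφker]
    have hγx : ∀ i, γ i x = bc i := by
      intro i
      have : γ i x = γ i u + ∑ j, c j * γ i (φ j) := by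
        simp [hx, map_sum, mul_comm]
      rw [this]
      have h2 : ∑ j, c j * γ i (φ j) = d i := by
        rw [← congrFun hMc i]
        simp [Matrix.mulVec, dotProduct, hMentry, mul_comm]
      rw [h2, hd]; ring
    simp only [ContinuousLinearMap.coe_coe] at hu ⊢
    rw [hTapp, hAx, hu]
    calc a + ∑ i, (γ i x) • z i = a + ∑ i, bc i • z i := by
          congr 1; exact Finset.sum_congr rfl fun i _ => by rw [hγx i]
      _ = a + b := by rw [hbc]
      _ = y := hab
  -- the continuous linear equivalence
  obtain ⟨E, hEapp⟩ : ∃ E : X ≃L[ℝ] Y, ∀ x, E x = T x :=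
    ⟨ContinuousLinearEquiv.ofBijective T hkerT hrangeT, fun _ => rfl⟩
  have hTinj : Function.Injective T := by
    intro a b hab
    have : E a = E b := by rw [hEapp, hEapp, hab]
    exact E.injective this
  have key : ∀ g : Y, ∃! x : X, A x + ∑ i, (γ i x) • z i = g := by
    intro g
    refine ⟨E.symm g, ?_, ?_⟩
    · show A (E.symm g) + ∑ i, (γ i (E.symm g)) • z i = g
      rw [← hTapp, ← hEapp, E.apply_symm_apply]
    · intro x hxg
      have : E x = g := by rw [hEapp, hTapp]; exact hxg
      rw [← this, E.symm_apply_apply]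
  constructor
  · intro f; exact key _
  · intro f xs hxs hγxs ftil hftil xt hxt
    have hTxs : T xs = f - ∑ i, (ψ i f) • z i := by
      rw [hTapp]
      simp [hγxs, hxs]
    -- bound
    set C : ℝ := ‖(E.symm : Y →L[ℝ] X)‖ * (1 + ∑ i, ‖ψ i‖ * ‖z i‖) with hC
    have hCnn : 0 ≤ C := by
      apply mul_nonneg (norm_nonneg _)
      positivity
    have hbound : ∀ δ > 0, ‖xt δ - xs‖ ≤ C * δ := by
      intro δ hδ
      set g : Y := ftil δ - f with hg
      have hgδ : ‖g‖ ≤ δ := hftil δ hδ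
      have hTxt : T (xt δ) = ftil δ - ∑ i, (ψ i (ftil δ)) • z i := by
        rw [hTapp]; exact hxt δ hδ
      have hw : T (xt δ) - T xs = g - ∑ i, (ψ i g) • z i := by
        rw [hTxt, hTxs, hg]
        simp only [map_sub, sub_smul]
        rw [Finset.sum_sub_distrib]
        abel
      have hdiff : xt δ - xs = E.symm (g - ∑ i, (ψ i g) • z i) := by
        have : E (xt δ - xs) = g - ∑ i, (ψ i g) • z i := by
          rw [hEapp, map_sub]; exact hw
        rw [← this, E.symm_apply_apply]
      rw [hdiff]
      have h1 : ‖g - ∑ i, (ψ i g) • z i‖ ≤ (1 + ∑ i, ‖ψ i‖ * ‖z i‖) * ‖g‖ := by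
        calc ‖g - ∑ i, (ψ i g) • z i‖ ≤ ‖g‖ + ‖∑ i, (ψ i g) • z i‖ :=
              norm_sub_le _ _
          _ ≤ ‖g‖ + ∑ i, ‖(ψ i g) • z i‖ := by
              gcongr; exact norm_sum_le _ _
          _ ≤ ‖g‖ + ∑ i, (‖ψ i‖ * ‖z i‖) * ‖g‖ := by
              gcongr with i _
              rw [norm_smul]
              calc ‖ψ i g‖ * ‖z i‖ ≤ (‖ψ i‖ * ‖g‖) * ‖z i‖ := by
                    gcongr; exact (ψ i).le_opNorm g
                _ = (‖ψ i‖ * ‖z i‖) * ‖g‖ := by ring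
          _ = (1 + ∑ i, ‖ψ i‖ * ‖z i‖) * ‖g‖ := by
              rw [← Finset.sum_mul]; ring
      calc ‖E.symm (g - ∑ i, (ψ i g) • z i)‖
          ≤ ‖(E.symm : Y →L[ℝ] X)‖ * ‖g - ∑ i, (ψ i g) • z i‖ :=
            (E.symm : Y →L[ℝ] X).le_opNorm _
        _ ≤ ‖(E.symm : Y →L[ℝ] X)‖ * ((1 + ∑ i, ‖ψ i‖ * ‖z i‖) * ‖g‖) := by
            gcongr
        _ = C * ‖g‖ := by rw [hC]; ring
        _ ≤ C * δ := by gcongr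
    have hlim : Tendsto (fun δ : ℝ => C * δ) (𝓝[>] (0 : ℝ)) (𝓝 0) := by
      have : Tendsto (fun δ : ℝ => C * δ) (𝓝 (0 : ℝ)) (𝓝 (C * 0)) :=
        (continuous_const.mul continuous_id).tendsto 0
      rw [mul_zero] at this
      exact this.mono_left nhdsWithin_le_nhds
    apply squeeze_zero'
    · exact Eventually.of_forall fun δ => norm_nonneg _
    · filter_upwards [self_mem_nhdsWithin] with δ hδ
      exact hbound δ hδ
    · exact hlim
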